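/- Let d : ℝ → ℝ be continuous, positive, ω-periodic, let f : ℝ → ℝ be continuous and ω-periodic, and define D(ω) = ∫₀^ω d(s) ds and (Φx)(t) = (exp(D(ω)) - 1)⁻¹ ∫ₜ^{t+ω} exp(∫ₜ^s d(r) dr)·f(s) ds. Then Φx is differentiable and satisfies (Φx)'(t) = -d(t)(Φx)(t) + f(t) for all t ∈ ℝ. -/

import Mathlib

theorem stmt_10 (ω : ℝ) (hω : 0 < ω) (d f : ℝ → ℝ)
    (hd : Continuous d) (hdpos : ∀ t, 0 < d t) (hdper : Function.Periodic d ω)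
    (hf : Continuous f) (hfper : Function.Periodic f ω)
    (Φ : ℝ → ℝ)
    (hΦ : ∀ t, Φ t = (Real.exp (∫ s in (0:ℝ)..ω, d s) - 1)⁻¹ *
      ∫ s in t..(t + ω), Real.exp (∫ r in t..s, d r) * f s) :
    ∀ t, HasDerivAt Φ (-d t * Φ t + f t) t := by
  set D : ℝ := ∫ s in (0:ℝ)..ω, d s with hD
  have hDpos : 0 < D :=
    intervalIntegral.intervalIntegral_pos_of_pos (hd.intervalIntegrable 0 ω) hdpos hω
  have hc : Real.exp D - 1 ≠ 0 := by
    have : 1 < Real.exp D := Real.one_lt_exp_iff.mpr hDpos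
    linarith
  set A : ℝ → ℝ := fun u => ∫ r in (0:ℝ)..u, d r with hA
  have hAderiv : ∀ u, HasDerivAt A (d u) u := fun u =>
    intervalIntegral.integral_hasDerivAt_right (hd.intervalIntegrable 0 u)
      (hd.stronglyMeasurableAtFilter _ _) hd.continuousAt
  have hAcont : Continuous A := continuous_iff_continuousAt.mpr fun u => (hAderiv u).continuousAt
  set g : ℝ → ℝ := fun u => Real.exp (A u) * f u with hg
  have hgcont : Continuous g := (Real.continuous_exp.comp hAcont).mul hf
  set F : ℝ → ℝ := fun u => ∫ s in (0:ℝ)..u, g s with hF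
  have hFderiv : ∀ u, HasDerivAt F (g u) u := fun u =>
    intervalIntegral.integral_hasDerivAt_right (hgcont.intervalIntegrable 0 u)
      (hgcont.stronglyMeasurableAtFilter _ _) hgcont.continuousAt
  have hΦeq : ∀ u, Φ u = (Real.exp D - 1)⁻¹ * (Real.exp (-(A u)) * (F (u + ω) - F u)) := by
    intro u
    rw [hΦ]
    congr 1
    have hsub : F (u + ω) - F u = ∫ s in u..(u + ω), g s :=
      intervalIntegral.integral_interval_sub_left (hgcont.intervalIntegrable 0 (u + ω))
        (hgcont.intervalIntegrable 0 u)
    rw [hsub, ← intervalIntegral.integral_const_mul]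
    apply intervalIntegral.integral_congr
    intro s _
    show Real.exp (∫ r in u..s, d r) * f s = Real.exp (-(A u)) * g s
    have h1 : ∫ r in u..s, d r = A s - A u :=
      (intervalIntegral.integral_interval_sub_left (hd.intervalIntegrable 0 s)
        (hd.intervalIntegrable 0 u)).symm
    have hgs : g s = Real.exp (A s) * f s := rfl
    rw [h1, hgs, show A s - A u = -(A u) + A s by ring, Real.exp_add]
    ring
  intro t
  have hAper : A (t + ω) = A t + D := by
    have h1 : A (t + ω) - A t = ∫ r in t..(t + ω), d r :=
      intervalIntegral.integral_interval_sub_left (hd.intervalIntegrable 0 (t + ω))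
        (hd.intervalIntegrable 0 t)
    have h2 : (∫ r in t..(t + ω), d r) = ∫ r in (0:ℝ)..(0 + ω), d r :=
      hdper.intervalIntegral_add_eq t 0
    rw [zero_add] at h2
    have : A (t + ω) - A t = D := by rw [h1, h2]
    linarith
  have h1 : HasDerivAt (fun u => Real.exp (-(A u))) (-d t * Real.exp (-(A t))) t := by
    have := ((hAderiv t).neg).exp
    convert this using 1
    show -d t * Real.exp (-(A t)) = Real.exp (-(A t)) * -d t; ring
    rfl
  have h2 : HasDerivAt (fun u => F (u + ω) - F u) (g (t + ω) - g t) t := by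
    have hc1 : HasDerivAt (fun u : ℝ => F (u + ω)) (g (t + ω)) t := by
      have := (hFderiv (t + ω)).comp t ((hasDerivAt_id t).add_const ω)
      rw [mul_one] at this; exact this
    exact hc1.sub (hFderiv t)
  have h3 : HasDerivAt (fun u => (Real.exp D - 1)⁻¹ * (Real.exp (-(A u)) * (F (u + ω) - F u)))
      ((Real.exp D - 1)⁻¹ * (-d t * Real.exp (-(A t)) * (F (t + ω) - F t) +
        Real.exp (-(A t)) * (g (t + ω) - g t))) t := (h1.mul h2).const_mul ((Real.exp D - 1)⁻¹)
  have hEq : Φ = fun u => (Real.exp D - 1)⁻¹ * (Real.exp (-(A u)) * (F (u + ω) - F u)) :=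
    funext hΦeq
  rw [hEq]
  convert h3 using 1
  have hgto : g (t + ω) = Real.exp (A t + D) * f t := by
    show Real.exp (A (t + ω)) * f (t + ω) = Real.exp (A t + D) * f t
    rw [hAper, hfper t]
  have hE1 : Real.exp (-(A t)) * Real.exp (A t) = 1 := by
    rw [← Real.exp_add]; simp
  have hE2 : Real.exp (-(A t)) * Real.exp (A t + D) = Real.exp D := by
    rw [← Real.exp_add]; congr 1; ring
  have hinv : (Real.exp D - 1)⁻¹ * (Real.exp D - 1) = 1 := inv_mul_cancel₀ hc
  have hgt : g t = Real.exp (A t) * f t := rfl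
  show -d t * ((Real.exp D - 1)⁻¹ * (Real.exp (-(A t)) * (F (t + ω) - F t))) + f t =
    (Real.exp D - 1)⁻¹ * (-d t * Real.exp (-(A t)) * (F (t + ω) - F t) +
      Real.exp (-(A t)) * (g (t + ω) - g t))
  rw [hgto, hgt]
  linear_combination (-((Real.exp D - 1)⁻¹ * f t)) * hE2 +
    ((Real.exp D - 1)⁻¹ * f t) * hE1 - (f t) * hinv
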